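/- Let G and H be finite graphs on disjoint vertex sets of equal size n+1 with β(G) = β(H), and let F = G + H be their join. Then for every vertex v of F, β(F − v) = β(F) − 1; that is, F is β-vertex-critical. -/

import Mathlib

def graphJoin {V W : Type*} (G : SimpleGraph V) (H : SimpleGraph W) :
    SimpleGraph (V ⊕ W) where
  Adj x y :=
    match x, y with
    | Sum.inl a, Sum.inl b => G.Adj a b
    | Sum.inr a, Sum.inr b => H.Adj a b
    | _, _ => True
  symm := ⟨by rintro (a | a) (b | b) h <;> first | exact h.symm | trivial⟩
  loopless := ⟨by rintro (a | a) h <;> first | exact G.loopless.irrefl a h | exact H.loopless.irrefl a h⟩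

def IsVertexCover {V : Type*} (G : SimpleGraph V) (C : Finset V) : Prop :=
  ∀ ⦃u v : V⦄, G.Adj u v → u ∈ C ∨ v ∈ C

noncomputable def vcNum {V : Type*} [Fintype V] (G : SimpleGraph V) : ℕ :=
  sInf {n | ∃ C : Finset V, IsVertexCover G C ∧ C.card = n}

open Finset

lemma vcNum_le {V : Type*} [Fintype V] {G : SimpleGraph V} {C : Finset V}
    (hC : IsVertexCover G C) : vcNum G ≤ C.card :=
  Nat.sInf_le ⟨C, hC, rfl⟩

lemma exists_min_cover {V : Type*} [Fintype V] (G : SimpleGraph V) :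
    ∃ C : Finset V, IsVertexCover G C ∧ C.card = vcNum G := by
  have hne : {n | ∃ C : Finset V, IsVertexCover G C ∧ C.card = n}.Nonempty :=
    ⟨(Finset.univ : Finset V).card, Finset.univ, fun u _ _ => Or.inl (mem_univ u), rfl⟩
  exact Nat.sInf_mem hne

lemma vcNum_le_of_iso {V W : Type*} [Fintype V] [Fintype W] [DecidableEq W]
    {G : SimpleGraph V} {H : SimpleGraph W} (e : G ≃g H) : vcNum H ≤ vcNum G := by
  obtain ⟨C, hC, hcard⟩ := exists_min_cover G
  have hcov : IsVertexCover H (C.image e) := by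
    intro u v huv
    have h' : G.Adj (e.symm u) (e.symm v) := e.symm.map_rel_iff.mpr huv
    rcases hC h' with h | h
    · exact Or.inl (mem_image.2 ⟨_, h, by simp⟩)
    · exact Or.inr (mem_image.2 ⟨_, h, by simp⟩)
  exact (vcNum_le hcov).trans (Finset.card_image_le.trans_eq hcard)

lemma vcNum_iso {V W : Type*} [Fintype V] [Fintype W] [DecidableEq V] [DecidableEq W]
    {G : SimpleGraph V} {H : SimpleGraph W} (e : G ≃g H) : vcNum G = vcNum H :=
  le_antisymm (vcNum_le_of_iso e.symm) (vcNum_le_of_iso e)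

lemma vcNum_join {V W : Type*} [Fintype V] [Fintype W] [DecidableEq V] [DecidableEq W]
    (G : SimpleGraph V) (H : SimpleGraph W) :
    vcNum (graphJoin G H) =
      min (Fintype.card V + vcNum H) (Fintype.card W + vcNum G) := by
  apply le_antisymm
  · refine le_min ?_ ?_
    · obtain ⟨C, hC, hcard⟩ := exists_min_cover H
      have hcov : IsVertexCover (graphJoin G H)
          ((univ.image Sum.inl) ∪ C.image Sum.inr) := by
        rintro (u | u) (v | v) h
        · exact Or.inl (by simp)
        · exact Or.inl (by simp)
        · exact Or.inr (by simp)
        · rcases hC h with h' | h'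
          · exact Or.inl (mem_union_right _ (mem_image.2 ⟨_, h', rfl⟩))
          · exact Or.inr (mem_union_right _ (mem_image.2 ⟨_, h', rfl⟩))
      refine (vcNum_le hcov).trans ?_
      rw [card_union_of_disjoint (by simp [disjoint_left]),
        Finset.card_image_of_injective _ Sum.inl_injective,
        Finset.card_image_of_injective _ Sum.inr_injective, card_univ, hcard]
    · obtain ⟨C, hC, hcard⟩ := exists_min_cover G
      have hcov : IsVertexCover (graphJoin G H)
          ((C.image Sum.inl) ∪ univ.image Sum.inr) := by
        rintro (u | u) (v | v) h
        · rcases hC h with h' | h'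
          · exact Or.inl (mem_union_left _ (mem_image.2 ⟨_, h', rfl⟩))
          · exact Or.inr (mem_union_left _ (mem_image.2 ⟨_, h', rfl⟩))
        · exact Or.inr (by simp)
        · exact Or.inl (by simp)
        · exact Or.inl (by simp)
      refine (vcNum_le hcov).trans ?_
      rw [card_union_of_disjoint (by simp [disjoint_left]),
        Finset.card_image_of_injective _ Sum.inl_injective,
        Finset.card_image_of_injective _ Sum.inr_injective, card_univ, hcard]
      omega
  · obtain ⟨C, hC, hcard⟩ := exists_min_cover (graphJoin G H)
    rw [← hcard, ← Finset.card_toLeft_add_card_toRight]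
    by_cases hall : ∀ x : V, Sum.inl x ∈ C
    · refine (min_le_left _ _).trans ?_
      have h1 : C.toLeft = univ := eq_univ_of_forall (by simpa using hall)
      have h2 : IsVertexCover H C.toRight := by
        intro u v huv
        have : (graphJoin G H).Adj (Sum.inr u) (Sum.inr v) := huv
        rcases hC this with h | h
        · exact Or.inl (by simpa using h)
        · exact Or.inr (by simpa using h)
      have := vcNum_le h2
      rw [h1, card_univ]
      omega
    · push_neg at hall
      obtain ⟨a, ha⟩ := hall
      refine (min_le_right _ _).trans ?_
      have h1 : C.toRight = univ := by
        refine eq_univ_of_forall fun y => ?_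
        have : (graphJoin G H).Adj (Sum.inl a) (Sum.inr y) := trivial
        rcases hC this with h | h
        · exact absurd h ha
        · simpa using h
      have h2 : IsVertexCover G C.toLeft := by
        intro u v huv
        have : (graphJoin G H).Adj (Sum.inl u) (Sum.inl v) := huv
        rcases hC this with h | h
        · exact Or.inl (by simpa using h)
        · exact Or.inr (by simpa using h)
      have := vcNum_le h2
      rw [h1, card_univ]
      omega

lemma vcNum_le_delete_add_one {V : Type*} [Fintype V] [DecidableEq V]
    (G : SimpleGraph V) (v : V) :
    vcNum G ≤ vcNum (G.induce {w | w ≠ v}) + 1 := by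
  obtain ⟨C, hC, hcard⟩ := exists_min_cover (G.induce {w | w ≠ v})
  have hcov : IsVertexCover G (insert v (C.image Subtype.val)) := by
    intro a b hab
    by_cases ha : a = v
    · exact Or.inl (by simp [ha])
    by_cases hb : b = v
    · exact Or.inr (by simp [hb])
    have h' : (G.induce {w | w ≠ v}).Adj ⟨a, ha⟩ ⟨b, hb⟩ := hab
    rcases hC h' with h | h
    · exact Or.inl (mem_insert_of_mem (mem_image.2 ⟨_, h, rfl⟩))
    · exact Or.inr (mem_insert_of_mem (mem_image.2 ⟨_, h, rfl⟩))
  refine (vcNum_le hcov).trans ?_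
  refine (card_insert_le _ _).trans ?_
  rw [Finset.card_image_of_injective _ Subtype.val_injective, hcard]

def joinDeleteLeftIso {V W : Type*} (G : SimpleGraph V) (H : SimpleGraph W) (a : V) :
    ((graphJoin G H).induce {w | w ≠ Sum.inl a}) ≃g
      graphJoin (G.induce {x | x ≠ a}) H where
  toFun := fun ⟨w, hw⟩ =>
    match w, hw with
    | Sum.inl x, h => Sum.inl ⟨x, fun e => h (congrArg Sum.inl e)⟩
    | Sum.inr y, _ => Sum.inr y
  invFun := fun z =>
    match z with
    | Sum.inl ⟨x, h⟩ => ⟨Sum.inl x, fun e => h (Sum.inl.inj e)⟩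
    | Sum.inr y => ⟨Sum.inr y, Sum.inr_ne_inl⟩
  left_inv := by rintro ⟨(x | y), h⟩ <;> rfl
  right_inv := by rintro (⟨x, h⟩ | y) <;> rfl
  map_rel_iff' := by rintro ⟨(x | y), hx⟩ ⟨(x' | y'), hx'⟩ <;> exact Iff.rfl

def joinDeleteRightIso {V W : Type*} (G : SimpleGraph V) (H : SimpleGraph W) (b : W) :
    ((graphJoin G H).induce {w | w ≠ Sum.inr b}) ≃g
      graphJoin G (H.induce {y | y ≠ b}) where
  toFun := fun ⟨w, hw⟩ =>
    match w, hw with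
    | Sum.inl x, _ => Sum.inl x
    | Sum.inr y, h => Sum.inr ⟨y, fun e => h (congrArg Sum.inr e)⟩
  invFun := fun z =>
    match z with
    | Sum.inl x => ⟨Sum.inl x, Sum.inl_ne_inr⟩
    | Sum.inr ⟨y, h⟩ => ⟨Sum.inr y, fun e => h (Sum.inr.inj e)⟩
  left_inv := by rintro ⟨(x | y), h⟩ <;> rfl
  right_inv := by rintro (x | ⟨y, h⟩) <;> rfl
  map_rel_iff' := by rintro ⟨(x | y), hx⟩ ⟨(x' | y'), hx'⟩ <;> exact Iff.rfl

lemma card_ne_set {V : Type*} [Fintype V] [DecidableEq V] (a : V) :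
    Fintype.card ({x : V | x ≠ a} : Set V) = Fintype.card V - 1 := by
  have h : Fintype.card ({x : V | x ≠ a} : Set V) = Fintype.card {x : V // ¬ x = a} :=
    Fintype.card_congr (Equiv.subtypeEquivRight fun x => Iff.rfl)
  rw [h, Fintype.card_subtype_compl, Fintype.card_subtype_eq]

theorem graphJoin_vertexCritical {V W : Type*} [Fintype V] [Fintype W]
    [DecidableEq V] [DecidableEq W] (n : ℕ)
    (hV : Fintype.card V = n + 1) (hW : Fintype.card W = n + 1)
    (G : SimpleGraph V) (H : SimpleGraph W) (hβ : vcNum G = vcNum H) :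
    ∀ v : V ⊕ W,
      vcNum ((graphJoin G H).induce {w | w ≠ v}) = vcNum (graphJoin G H) - 1 := by
  have hJ : vcNum (graphJoin G H) = (n + 1) + vcNum G := by
    rw [vcNum_join, hV, hW, ← hβ, min_self]
  rintro (a | b)
  · rw [vcNum_iso (joinDeleteLeftIso G H a), vcNum_join, card_ne_set, hV, hW, hJ]
    have h1 := vcNum_le_delete_add_one G a
    omega
  · rw [vcNum_iso (joinDeleteRightIso G H b), vcNum_join, card_ne_set, hV, hW, hJ, hβ]
    have h1 := vcNum_le_delete_add_one H b
    omega
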